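/- Let E be an elliptic curve over a finite field k, {Y_i}_{i∈I} a finite family of finite subsets of E(k), Y = ∪_i Y_i, and m > |Y| a positive integer. Then there exists a finite extension k' of k and a subset Σ ⊆ E(k') with |Σ| = m, Σ ∩ Y = ∅, such that for every i, the evaluation code C_L((Y_i), Σ) is MDS; equivalently, for every i and every subset J ⊆ Σ with |J| = |Y_i|, the divisor (Y_i) − (J) is not principal. -/
import Mathlib


open scoped Classical

/-- The effective divisor `(Z) = Σ_{z ∈ Z} z` attached to a finite set `Z` of points. -/
noncomputable def setDiv {pt : Type} (Z : Finset pt) : pt →₀ ℤ :=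
  ∑ z ∈ Z, Finsupp.single z 1

noncomputable def divHom {A M : Type} [AddCommGroup M] (g : A → M) : (A →₀ ℤ) →+ M :=
  Finsupp.liftAddHom (fun a => zmultiplesHom M (g a))

lemma divHom_apply {A M : Type} [AddCommGroup M] (g : A → M) (D : A →₀ ℤ) :
    divHom g D = D.sum (fun a n => n • g a) := rfl

lemma divHom_setDiv {A M : Type} [AddCommGroup M] (g : A → M) (Z : Finset A) :
    divHom g (setDiv Z) = ∑ z ∈ Z, g z := by
  simp [setDiv, divHom, map_sum]

lemma ekmono {A : Type} (Ek : ℕ → Set A) (hEkmono : ∀ n, Ek n ⊆ Ek (n + 1)) :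
    ∀ {p q : ℕ}, p ≤ q → Ek p ⊆ Ek q := by
  intro p q h
  induction q with
  | zero => simpa [Nat.le_zero.mp h]
  | succ q ih =>
    rcases Nat.lt_or_ge p (q+1) with h' | h'
    · exact (ih (Nat.lt_succ_iff.mp h')).trans (hEkmono q)
    · have : p = q + 1 := le_antisymm h h'
      simp [this]

lemma greedy {A : Type} [AddCommGroup A] [Infinite A]
    {ι : Type} [Fintype ι] (Y : ι → Finset A) (hYne : ∀ i, (Y i).Nonempty) :
    ∀ c : ℕ, ∃ Sg : Finset A, Sg.card = c ∧
      (∀ i, ∀ y ∈ Y i, y ∉ Sg) ∧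
      ∀ i, ∀ J ⊆ Sg, J.card = (Y i).card → (∑ x ∈ J, x) ≠ ∑ y ∈ Y i, y := by
  intro c
  induction c with
  | zero =>
    refine ⟨∅, rfl, by simp, ?_⟩
    intro i J hJ hc
    have hJe : J = ∅ := Finset.subset_empty.mp hJ
    subst hJe
    have := (hYne i).card_pos
    simp at hc
    omega
  | succ c ih =>
    obtain ⟨Sg, hcard, hdisj, hmain⟩ := ih
    set bad : Finset A :=
      (Finset.univ.biUnion Y) ∪ Sg ∪
        Finset.univ.biUnion (fun i => Sg.powerset.image
          (fun J' => (∑ y ∈ Y i, y) - ∑ x ∈ J', x)) with hbad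
    obtain ⟨x, hx⟩ := Infinite.exists_notMem_finset bad
    have hxY : ∀ i, ∀ y ∈ Y i, y ≠ x := by
      intro i y hy he
      apply hx
      simp only [hbad, Finset.mem_union, Finset.mem_biUnion]
      exact Or.inl (Or.inl ⟨i, Finset.mem_univ i, he ▸ hy⟩)
    have hxS : x ∉ Sg := fun h => hx (by simp [hbad, h])
    refine ⟨insert x Sg, by rw [Finset.card_insert_of_notMem hxS, hcard], ?_, ?_⟩
    · intro i y hy
      simp only [Finset.mem_insert]
      push_neg
      exact ⟨hxY i y hy, hdisj i y hy⟩
    · intro i J hJ hc heq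
      by_cases hxJ : x ∈ J
      · have hJ' : J.erase x ⊆ Sg := by
          intro z hz
          have := hJ (Finset.mem_of_mem_erase hz)
          rcases Finset.mem_insert.mp this with h | h
          · exact absurd h (Finset.ne_of_mem_erase hz)
          · exact h
        have hsum : (∑ x' ∈ J, x') = x + ∑ x' ∈ J.erase x, x' :=
          (Finset.add_sum_erase _ _ hxJ).symm
        apply hx
        simp only [hbad, Finset.mem_union, Finset.mem_biUnion]
        refine Or.inr ⟨i, Finset.mem_univ i, ?_⟩
        simp only [Finset.mem_image, Finset.mem_powerset]
        exact ⟨J.erase x, hJ', by rw [← heq, hsum]; abel⟩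
      · have : J ⊆ Sg := fun z hz => by
          rcases Finset.mem_insert.mp (hJ hz) with h | h
          · exact absurd (h ▸ hz) hxJ
          · exact h
        exact hmain i J this hc heq

lemma findEk {A : Type} (Ek : ℕ → Set A) (hEkmono : ∀ n, Ek n ⊆ Ek (n + 1))
    (hEkall : ∀ a : A, ∃ n, a ∈ Ek n) (Sg : Finset A) :
    ∃ n, (Sg : Set A) ⊆ Ek n := by
  induction Sg using Finset.induction with
  | empty => exact ⟨0, by simp⟩
  | @insert a s ha ih =>
    obtain ⟨n1, hn1⟩ := ih
    obtain ⟨n2, hn2⟩ := hEkall a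
    refine ⟨max n1 n2, ?_⟩
    intro z hz
    simp only [Finset.coe_insert, Set.mem_insert_iff] at hz
    rcases hz with rfl | hz
    · exact ekmono Ek hEkmono (le_max_right n1 n2) hn2
    · exact ekmono Ek hEkmono (le_max_left n1 n2) (hn1 hz)


/-- Model of an elliptic curve `E` over a finite field `k`: `A = E(k̄)`
is the (infinite) group of points, `Ek n = E(k_n)` are the finite sets of points
rational over the finite extensions of `k`, exhausting `A`; `K` is the function field,
`dv` the principal-divisor map, and a degree-zero divisor is principal iff its sum under
the group law is `0` (Abel–Jacobi).  Let `{Y i}` be a finite family of finite subsets of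
`E(k) = Ek 0`, `Y = ∪ᵢ Y i`, and `m > |Y|`.  Then there is a finite extension `k'`
(i.e. some `Ek n`) and a subset `Σ ⊆ E(k')` with `|Σ| = m`, `Σ ∩ Y = ∅`, such that for
every `i` and every `J ⊆ Σ` with `|J| = |Y i|` the divisor `(Y i) - (J)` is not
principal — equivalently, every evaluation code `C_L((Y i), Σ)` is MDS. -/
theorem stmt19 {K A : Type} [Field K] [AddCommGroup A] [Infinite A]
    (Ek : ℕ → Set A) (hEkfin : ∀ n, (Ek n).Finite)
    (hEkmono : ∀ n, Ek n ⊆ Ek (n + 1)) (hEkall : ∀ a : A, ∃ n, a ∈ Ek n)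
    (dv : Kˣ → (A →₀ ℤ))
    (hAJ : ∀ D : A →₀ ℤ, (D.sum fun _ n => n) = 0 →
      ((∃ u : Kˣ, dv u = D) ↔ (D.sum fun a n => n • a) = (0 : A)))
    {ι : Type} [Fintype ι] (Y : ι → Finset A)
    (hYrat : ∀ i, (Y i : Set A) ⊆ Ek 0) (hYne : ∀ i, (Y i).Nonempty)
    (m : ℕ) (hm : (Finset.univ.biUnion Y).card < m) :
    ∃ (n : ℕ) (Sg : Finset A),
      (Sg : Set A) ⊆ Ek n ∧
      Sg.card = m ∧
      Disjoint (Sg : Set A) (⋃ i, (Y i : Set A)) ∧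
      ∀ i, ∀ J ⊆ Sg, J.card = (Y i).card →
        ¬ ∃ u : Kˣ, dv u = setDiv (Y i) - setDiv J := by
  obtain ⟨Sg, hcard, hdisj, hmain⟩ := greedy Y hYne m
  obtain ⟨n, hn⟩ := findEk Ek hEkmono hEkall Sg
  refine ⟨n, Sg, hn, hcard, ?_, ?_⟩
  · rw [Set.disjoint_right]
    intro y hy
    simp only [Set.mem_iUnion, Finset.mem_coe] at hy
    obtain ⟨i, hi⟩ := hy
    exact fun h => hdisj i y hi (Finset.mem_coe.mp h)
  · intro i J hJ hc hprin
    set D : A →₀ ℤ := setDiv (Y i) - setDiv J with hD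
    have hdeg : (D.sum fun _ n => n) = 0 := by
      have h1 : (D.sum fun _ n => n) = D.sum (fun a n => n • ((fun _ => (1:ℤ)) a)) := by
        simp
      rw [h1, ← divHom_apply, hD, map_sub, divHom_setDiv, divHom_setDiv]
      simp [hc]
    have := (hAJ D hdeg).mp hprin
    rw [← divHom_apply, hD, map_sub, divHom_setDiv, divHom_setDiv, sub_eq_zero] at this
    exact hmain i J hJ hc this.symm
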